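/- With the notation of the previous statement, for every path μ, r_μ(d_μ^{-1}(1)) equals exactly the set of p(μ)-th roots of unity { e^{2πij/p(μ)} : j = 0, 1, …, p(μ)−1 }. -/

import Mathlib

open Real

/-- The contraction number `p(μ)` of a path, defined recursively. -/
def contractionNum {E : Type*} (n : E → ℕ) (m : E → ℤ) : List E → ℕ
  | [] => 1
  | e :: ν =>
    if m e = 0 then 1
    else (n e * contractionNum n m ν) / Nat.gcd (n e * contractionNum n m ν) (m e).natAbs

lemma circle_exp_zpow (x : ℝ) (k : ℤ) : Circle.exp x ^ k = Circle.exp (k * x) := by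
  have h := map_zsmul Circle.expHom k x
  simpa [Circle.expHom, zsmul_eq_mul] using h.symm

lemma circle_exp_pow (x : ℝ) (k : ℕ) : Circle.exp x ^ k = Circle.exp (k * x) := by
  have := circle_exp_zpow x (k : ℤ)
  simpa using this

lemma circle_exp_eq_one {x : ℝ} : Circle.exp x = 1 ↔ ∃ k : ℤ, x = k * (2 * π) := by
  rw [← Circle.exp_zero, Circle.exp_eq_exp]
  simp

lemma rootsEq (q : ℕ) (hq : 0 < q) :
    {w : Circle | w ^ q = 1} =
      {w : Circle | ∃ j : ℕ, j < q ∧ w = Circle.exp (2 * π * j / q)} := by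
  have hq' : (q : ℝ) ≠ 0 := Nat.cast_ne_zero.mpr hq.ne'
  ext w
  simp only [Set.mem_setOf_eq]
  constructor
  · intro hw
    obtain ⟨x, rfl⟩ : ∃ x, Circle.exp x = w := ⟨_, Circle.exp_arg w⟩
    rw [circle_exp_pow, circle_exp_eq_one] at hw
    obtain ⟨k, hk⟩ := hw
    have hx : x = 2 * π * k / q := by
      field_simp at hk ⊢; linarith [hk]
    refine ⟨(k % q).toNat, ?_, ?_⟩
    · have h1 : k % (q : ℤ) < q := Int.emod_lt_of_pos k (by exact_mod_cast hq)
      omega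
    · have h0 : (0:ℤ) ≤ k % q := Int.emod_nonneg k (by exact_mod_cast hq.ne')
      have hcast : ((k % (q:ℤ)).toNat : ℝ) = ((k % q : ℤ) : ℝ) := by
        exact_mod_cast Int.toNat_of_nonneg h0
      rw [hx, hcast]
      obtain ⟨t, ht⟩ : (q:ℤ) ∣ (k - k % q) := Int.dvd_self_sub_of_emod_eq rfl
      rw [Circle.exp_eq_exp]
      refine ⟨t, ?_⟩
      have : (k:ℝ) - (k % (q:ℤ) : ℤ) = (q:ℝ) * t := by exact_mod_cast congrArg (Int.cast : ℤ → ℝ) ht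
      field_simp
      linear_combination this
  · rintro ⟨j, hj, rfl⟩
    rw [circle_exp_pow]
    have : (q:ℝ) * (2 * π * j / q) = (j : ℤ) * (2 * π) := by push_cast; rw [mul_div_assoc', mul_div_cancel_left₀ _ hq']; ring
    rw [this, Circle.exp_int_mul_two_pi]


lemma powImage (N : ℕ) (hN : 0 < N) (mm : ℤ) (hm : mm ≠ 0) :
    {w : Circle | ∃ a : Circle, a ^ N = 1 ∧ a ^ mm = w} =
      {w : Circle | w ^ (N / Nat.gcd N mm.natAbs) = 1} := by
  have hma : mm.natAbs ≠ 0 := Int.natAbs_ne_zero.mpr hm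
  set g : ℕ := Nat.gcd N mm.natAbs with hg
  have hgpos : 0 < g := Nat.gcd_pos_of_pos_left _ hN
  set q : ℕ := N / g with hq
  have hNgq : N = g * q := (Nat.div_mul_cancel (Nat.gcd_dvd_left _ _)).symm.trans (mul_comm _ _)
  have hqpos : 0 < q := Nat.div_pos (Nat.le_of_dvd hN (Nat.gcd_dvd_left _ _)) hgpos
  have hgm : (g : ℤ) ∣ mm := Int.dvd_natAbs.mp (Int.natCast_dvd_natCast.mpr (Nat.gcd_dvd_right _ _))
  obtain ⟨m', hm'⟩ := hgm
  have hq' : (q : ℝ) ≠ 0 := Nat.cast_ne_zero.mpr hqpos.ne'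
  have hN' : (N : ℝ) ≠ 0 := Nat.cast_ne_zero.mpr hN.ne'
  ext w
  simp only [Set.mem_setOf_eq]
  constructor
  · rintro ⟨a, haN, rfl⟩
    have h1 : (a ^ mm) ^ q = a ^ (mm * q) := by
      rw [← zpow_natCast (a ^ mm) q, ← zpow_mul]
    have h2 : mm * q = m' * N := by
      rw [hm']; push_cast [hNgq]; ring
    rw [h1, h2, mul_comm m' (N:ℤ), zpow_mul, zpow_natCast, haN, one_zpow]
  · intro hw
    obtain ⟨x, rfl⟩ : ∃ x, Circle.exp x = w := ⟨_, Circle.exp_arg w⟩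
    rw [circle_exp_pow, circle_exp_eq_one] at hw
    obtain ⟨k, hk⟩ := hw
    -- coprimality of q and m'
    have hmabs : mm.natAbs = g * m'.natAbs := by
      simp [hm', Int.natAbs_mul]
    have hcop : Nat.Coprime q m'.natAbs := by
      have := Nat.coprime_div_gcd_div_gcd (m := N) (n := mm.natAbs) hgpos
      rwa [← hg, ← hq, hmabs, Nat.mul_div_cancel_left _ hgpos] at this
    have hcopZ : IsCoprime (q : ℤ) m' := by
      rw [Int.isCoprime_iff_gcd_eq_one]
      simpa [Int.gcd, Int.natAbs_natCast] using hcop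
    obtain ⟨u, v, huv⟩ := hcopZ
    refine ⟨Circle.exp (2 * π * ((k * v : ℤ) : ℝ) / N), ?_, ?_⟩
    · rw [circle_exp_pow]
      have : (N : ℝ) * (2 * π * ((k * v : ℤ) : ℝ) / N) = ((k * v : ℤ) : ℝ) * (2 * π) := by field_simp
      rw [this, Circle.exp_int_mul_two_pi]
    · rw [circle_exp_zpow, Circle.exp_eq_exp]
      refine ⟨-(k * u), ?_⟩
      have hx : x = k * (2 * π) / q := by
        field_simp at hk ⊢; linarith [hk]
      have hmr : (mm : ℝ) = (g : ℝ) * (m' : ℝ) := by exact_mod_cast congrArg (Int.cast : ℤ → ℝ) hm'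
      have hNr : (N : ℝ) = (g : ℝ) * (q : ℝ) := by exact_mod_cast congrArg (Nat.cast : ℕ → ℝ) hNgq
      have huvr : (u : ℝ) * q + (v : ℝ) * m' = 1 := by exact_mod_cast congrArg (Int.cast : ℤ → ℝ) huv
      rw [hx]
      push_cast
      rw [hNr, hmr]
      have hg' : (g : ℝ) ≠ 0 := Nat.cast_ne_zero.mpr hgpos.ne'
      field_simp
      linear_combination (k:ℝ) * huvr

lemma contractionNum_pos {E : Type*} (n : E → ℕ) (m : E → ℤ) (hn : ∀ e, 0 < n e) :
    ∀ μ : List E, 0 < contractionNum n m μ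
  | [] => Nat.one_pos
  | e :: ν => by
    rw [contractionNum]
    split
    · exact Nat.one_pos
    · rename_i h
      have h1 : 0 < n e * contractionNum n m ν :=
        Nat.mul_pos (hn e) (contractionNum_pos n m hn ν)
      exact Nat.div_pos (Nat.le_of_dvd h1 (Nat.gcd_dvd_left _ _))
        (Nat.gcd_pos_of_pos_left _ h1)

lemma contractionNum_eq {E : Type*} (n : E → ℕ) (m : E → ℤ) (hn : ∀ e, 0 < n e)
    (e : E) (ν : List E) (hm : m e ≠ 0) :
    contractionNum n m (e :: ν) =
      (n e * contractionNum n m ν) / Nat.gcd (n e * contractionNum n m ν) (m e).natAbs := by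
  rw [contractionNum, if_neg hm]

lemma powImage' (N : ℕ) (hN : 0 < N) (mm : ℤ) :
    {w : Circle | ∃ a : Circle, a ^ N = 1 ∧ a ^ mm = w} =
      {w : Circle | w ^ (if mm = 0 then 1 else N / Nat.gcd N mm.natAbs) = 1} := by
  by_cases hm : mm = 0
  · subst hm
    simp only [if_pos rfl]
    ext w
    simp only [Set.mem_setOf_eq, zpow_zero, eq_self_iff_true, if_true, pow_one]
    constructor
    · rintro ⟨a, _, rfl⟩; rfl
    · rintro rfl; exact ⟨1, one_pow _, rfl⟩
  · rw [if_neg hm]; exact powImage N hN mm hm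

lemma aux {E : Type*} (n : E → ℕ) (m : E → ℤ) (hn : ∀ e, 0 < n e) :
    ∀ (μ : List E) (hμ : μ ≠ []),
    ((fun z : Fin μ.length → Circle =>
        z ⟨0, List.length_pos_iff.mpr hμ⟩ ^ m (μ.head hμ)) ''
      {z : Fin μ.length → Circle |
        (∀ (i : ℕ) (h : i + 1 < μ.length),
          z ⟨i, Nat.lt_of_succ_lt h⟩ ^ n (μ.get ⟨i, Nat.lt_of_succ_lt h⟩) =
            z ⟨i + 1, h⟩ ^ m (μ.get ⟨i + 1, h⟩)) ∧
        z ⟨μ.length - 1, Nat.sub_lt (List.length_pos_iff.mpr hμ) Nat.one_pos⟩ ^ n (μ.getLast hμ) =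
          1}) = {w : Circle | w ^ contractionNum n m μ = 1} := by
  intro μ
  induction μ with
  | nil => intro h; exact absurd rfl h
  | cons e ν ih =>
    intro hμ
    cases ν with
    | nil =>
      have key : ((fun z : Fin 1 → Circle => z ⟨0, Nat.one_pos⟩ ^ m e) ''
          {z : Fin 1 → Circle |
            (∀ (i : ℕ) (h : i + 1 < 1), z ⟨i, by omega⟩ ^ n ([e].get ⟨i, by omega⟩) =
              z ⟨i + 1, h⟩ ^ m ([e].get ⟨i + 1, h⟩)) ∧
            z ⟨0, Nat.one_pos⟩ ^ n e = 1}) =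
          {w : Circle | ∃ a : Circle, a ^ n e = 1 ∧ a ^ m e = w} := by
        ext w
        simp only [Set.mem_image, Set.mem_setOf_eq]
        constructor
        · rintro ⟨z, ⟨-, hz⟩, rfl⟩
          exact ⟨z ⟨0, Nat.one_pos⟩, hz, rfl⟩
        · rintro ⟨a, ha, rfl⟩
          exact ⟨fun _ => a, ⟨fun i h => by omega, ha⟩, rfl⟩
      calc _ = {w : Circle | ∃ a : Circle, a ^ n e = 1 ∧ a ^ m e = w} := key
        _ = _ := by
          rw [powImage' (n e) (hn e)]
          have : contractionNum n m [e] =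
              if m e = 0 then 1 else n e / Nat.gcd (n e) (m e).natAbs := by
            rw [contractionNum]
            simp [contractionNum]
          rw [this]
    | cons f ρ =>
      have hν : (f :: ρ : List E) ≠ [] := List.cons_ne_nil f ρ
      have IH := ih hν
      set P : ℕ := contractionNum n m (f :: ρ) with hP
      have hPpos : 0 < P := contractionNum_pos n m hn _
      have hNpos : 0 < n e * P := Nat.mul_pos (hn e) hPpos
      have key : ((fun z : Fin (e :: f :: ρ).length → Circle =>
          z ⟨0, List.length_pos_iff.mpr hμ⟩ ^ m ((e :: f :: ρ).head hμ)) ''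
        {z : Fin (e :: f :: ρ).length → Circle |
          (∀ (i : ℕ) (h : i + 1 < (e :: f :: ρ).length),
            z ⟨i, by omega⟩ ^ n ((e :: f :: ρ).get ⟨i, by omega⟩) =
              z ⟨i + 1, h⟩ ^ m ((e :: f :: ρ).get ⟨i + 1, h⟩)) ∧
          z ⟨(e :: f :: ρ).length - 1, by simp⟩ ^ n ((e :: f :: ρ).getLast hμ) = 1}) =
          {w : Circle | ∃ a : Circle, a ^ (n e * P) = 1 ∧ a ^ m e = w} := by
        ext w
        simp only [Set.mem_image, Set.mem_setOf_eq]
        constructor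
        · rintro ⟨z, ⟨hchain, hlast⟩, rfl⟩
          refine ⟨z ⟨0, by simp⟩, ?_, rfl⟩
          have h1 : z ⟨0, by simp⟩ ^ n e = z ⟨1, by simp⟩ ^ m f := hchain 0 (by simp only [List.length_cons]; omega)
          have hz' : (fun i : Fin (f :: ρ).length => z i.succ) ∈
              {z' : Fin (f :: ρ).length → Circle |
                (∀ (i : ℕ) (h : i + 1 < (f :: ρ).length),
                  z' ⟨i, by omega⟩ ^ n ((f :: ρ).get ⟨i, by omega⟩) =
                    z' ⟨i + 1, h⟩ ^ m ((f :: ρ).get ⟨i + 1, h⟩)) ∧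
                z' ⟨(f :: ρ).length - 1, by simp⟩ ^ n ((f :: ρ).getLast hν) = 1} := by
            constructor
            · intro i h
              exact hchain (i + 1) (by simp only [List.length_cons] at h ⊢; omega)
            · have := hlast
              rw [List.getLast_cons hν] at this
              exact this
          have hmem : z ⟨1, by simp⟩ ^ m f ∈
              {w : Circle | w ^ P = 1} := by
            rw [← IH]
            exact ⟨_, hz', rfl⟩
          rw [pow_mul, h1]
          exact hmem
        · rintro ⟨a, ha, rfl⟩
          have hane : a ^ n e ∈ {w : Circle | w ^ P = 1} := by
            rw [Set.mem_setOf_eq, ← pow_mul]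
            exact ha
          rw [← IH] at hane
          obtain ⟨z', ⟨hc', hl'⟩, hz0⟩ := hane
          refine ⟨fun i : Fin (e :: f :: ρ).length =>
              if i.val = 0 then a
              else z' ⟨i.val - 1, by
                have := i.isLt; simp only [List.length_cons] at this ⊢; omega⟩,
            ⟨?_, ?_⟩, rfl⟩
          · intro i h
            match i, h with
            | 0, h =>
              show a ^ n e = z' ⟨0, by simp⟩ ^ m f
              exact hz0.symm
            | (j + 1), h =>
              show z' ⟨j, by simp only [List.length_cons] at h ⊢; omega⟩ ^
                  n ((f :: ρ).get ⟨j, by simp only [List.length_cons] at h ⊢; omega⟩) =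
                z' ⟨j + 1, by simp only [List.length_cons] at h ⊢; omega⟩ ^
                  m ((f :: ρ).get ⟨j + 1, by simp only [List.length_cons] at h ⊢; omega⟩)
              exact hc' j (by simp only [List.length_cons] at h ⊢; omega)
          · show z' ⟨(f :: ρ).length - 1, by simp⟩ ^ n ((e :: f :: ρ).getLast hμ) = 1
            rw [List.getLast_cons hν]
            exact hl'
      calc _ = {w : Circle | ∃ a : Circle, a ^ (n e * P) = 1 ∧ a ^ m e = w} := key
        _ = _ := by
          rw [powImage' (n e * P) hNpos]
          have : contractionNum n m (e :: f :: ρ) =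
              if m e = 0 then 1 else (n e * P) / Nat.gcd (n e * P) (m e).natAbs := by
            rw [contractionNum]
          rw [this]

/-- For a path `μ = (e₁, …, e_k)` in a directed graph with weights `n : E¹ → ℤ₊`,
`m : E¹ → ℤ`, with `𝕋_μ = { z ∈ 𝕋^k : z_i^{n(e_i)} = z_{i+1}^{m(e_{i+1})} }`,
`d_μ(z) = z_k^{n(e_k)}` and `r_μ(z) = z_1^{m(e_1)}`, the set `r_μ(d_μ⁻¹(1))` is
exactly the set of `p(μ)`-th roots of unity `{ e^{2πij/p(μ)} : j = 0, …, p(μ)−1 }`. -/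
theorem stmt7 {V E : Type*} (dom ran : E → V) (n : E → ℕ) (m : E → ℤ)
    (hn : ∀ e, 0 < n e)
    (μ : List E) (hμ : μ ≠ []) (hchain : μ.Chain' (fun e f => dom e = ran f)) :
    (fun z : Fin μ.length → Circle =>
        z ⟨0, List.length_pos_iff.mpr hμ⟩ ^ m (μ.head hμ)) ''
      {z : Fin μ.length → Circle |
        (∀ (i : ℕ) (h : i + 1 < μ.length),
          z ⟨i, by omega⟩ ^ n (μ.get ⟨i, by omega⟩) =
            z ⟨i + 1, h⟩ ^ m (μ.get ⟨i + 1, h⟩)) ∧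
        z ⟨μ.length - 1, by have := List.length_pos_iff.mpr hμ; omega⟩ ^ n (μ.getLast hμ) =
          1} =
    {w : Circle | ∃ j : ℕ, j < contractionNum n m μ ∧
      w = Circle.exp (2 * π * j / contractionNum n m μ)} := by
  exact (aux n m hn μ hμ).trans (rootsEq _ (contractionNum_pos n m hn μ))
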